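/- Setting q = e^{h/2}, the series U(e^u) = e^{-h/2} f(e^{2u})^{-1} f(e^{-2u})^{-1} satisfies U(e^u)·U(e^{u+h/2}) = 1 in C((u))[[h]]. -/

import Mathlib

/-!
STATEMENT 8: Setting q = e^{h/2}, the series
  U(e^u) = e^{-h/2} f(e^{2u})^{-1} f(e^{-2u})^{-1}
satisfies U(e^u)·U(e^{u+h/2}) = 1 in ℂ((u))[[h]].

We work in `B := PowerSeries (LaurentSeries ℂ)` = ℂ((u))[[h]] (outer variable h,
inner variable u).  The elements F2, F2', Fm2, Fm2' play the roles of
f(e^{2u}), f(e^{2u+h}), f(e^{-2u}), f(e^{-2u-h}) respectively; they are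
characterized (per the context) by the instances of the functional identity
f(x)·f(xq²)·(1-xq²) = 1-x  (q² = e^h)  at x = e^{2u} and x = e^{-2u-h}, and
G2, G2', Gm2, Gm2' are their inverses.  Note f((e^{u+h/2})²) = f(e^{2u+h}) and
f(e^{-2(u+h/2)}) = f(e^{-2u-h}), so
U(e^u) = e^{-h/2}·G2·Gm2 and U(e^{u+h/2}) = e^{-h/2}·G2'·Gm2'.
-/

open PowerSeries

noncomputable section

abbrev B8 := PowerSeries (LaurentSeries ℂ)

/-- `e^{c·u}` as an element of ℂ((u)). -/
def expU (c : ℂ) : LaurentSeries ℂ :=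
  (HahnSeries.ofPowerSeries ℤ ℂ) (PowerSeries.rescale c (PowerSeries.exp ℂ))

/-- `e^{c·h}` as an element of ℂ((u))[[h]]. -/
def expH (c : ℂ) : B8 :=
  PowerSeries.map (algebraMap ℂ (LaurentSeries ℂ)) (PowerSeries.rescale c (PowerSeries.exp ℂ))

/-- `e^{2u}` in ℂ((u))[[h]]. -/
def E2u : B8 := PowerSeries.C (expU 2)

/-- `e^{-2u}` in ℂ((u))[[h]]. -/
def Em2u : B8 := PowerSeries.C (expU (-2))

lemma expH_mul (a b : ℂ) : expH a * expH b = expH (a + b) := by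
  unfold expH
  rw [← map_mul, PowerSeries.exp_mul_exp_eq_exp_add]

lemma expH_zero : expH 0 = 1 := by
  unfold expH
  rw [PowerSeries.rescale_zero]
  simp

lemma expU_mul (a b : ℂ) : expU a * expU b = expU (a + b) := by
  unfold expU
  rw [← map_mul, PowerSeries.exp_mul_exp_eq_exp_add]

lemma expU_zero : expU 0 = 1 := by
  unfold expU
  rw [PowerSeries.rescale_zero]
  simp

lemma hE : E2u * Em2u = 1 := by
  unfold E2u Em2u
  rw [← map_mul, expU_mul]
  norm_num [expU_zero]

lemma expU_ne_one {c : ℂ} (hc : c ≠ 0) : expU c ≠ 1 := by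
  unfold expU
  intro h
  have h1 : (HahnSeries.ofPowerSeries ℤ ℂ) (PowerSeries.rescale c (PowerSeries.exp ℂ)) =
      (HahnSeries.ofPowerSeries ℤ ℂ) 1 := by simpa using h
  have := HahnSeries.ofPowerSeries_injective h1
  have h2 := congrArg (PowerSeries.coeff 1) this
  simp [PowerSeries.coeff_rescale, PowerSeries.coeff_exp, PowerSeries.coeff_one] at h2
  exact hc h2

lemma constantCoeff_expH (c : ℂ) : PowerSeries.constantCoeff (expH c) = 1 := by
  unfold expH
  simp [PowerSeries.coeff_rescale, ← PowerSeries.coeff_zero_eq_constantCoeff,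
    PowerSeries.coeff_exp]

lemma ne1 : (1 : B8) - E2u * expH 1 ≠ 0 := by
  intro h
  have h2 := congrArg PowerSeries.constantCoeff h
  simp [E2u, constantCoeff_expH] at h2
  exact expU_ne_one (by norm_num : (2:ℂ) ≠ 0) (sub_eq_zero.mp h2).symm

lemma ne2 : (1 : B8) - Em2u ≠ 0 := by
  intro h
  have h2 := congrArg PowerSeries.constantCoeff h
  simp [Em2u] at h2
  exact expU_ne_one (by norm_num : (-2:ℂ) ≠ 0) (sub_eq_zero.mp h2).symm

theorem stmt8 (F2 F2' Fm2 Fm2' G2 G2' Gm2 Gm2' : B8)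
    (hG2 : F2 * G2 = 1) (hG2' : F2' * G2' = 1)
    (hGm2 : Fm2 * Gm2 = 1) (hGm2' : Fm2' * Gm2' = 1)
    -- f(e^{2u})·f(e^{2u}·e^h)·(1 - e^{2u}e^h) = 1 - e^{2u}
    (hid1 : F2 * F2' * (1 - E2u * expH 1) = 1 - E2u)
    -- f(e^{-2u-h})·f(e^{-2u-h}·e^h)·(1 - e^{-2u}) = 1 - e^{-2u-h}
    (hid2 : Fm2' * Fm2 * (1 - Em2u) = 1 - Em2u * expH (-1)) :
    (expH (-(1/2)) * G2 * Gm2) * (expH (-(1/2)) * G2' * Gm2') = 1 := by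

  have hm1 : expH (-1) * expH 1 = 1 := by
    rw [expH_mul]; norm_num [expH_zero]
  have hhalf : expH (-(1/2)) * expH (-(1/2)) = expH (-1) := by
    rw [expH_mul]; norm_num
  have hEE : E2u * Em2u = 1 := hE
  have hD : ((1 : B8) - E2u * expH 1) * (1 - Em2u) ≠ 0 := mul_ne_zero ne1 ne2
  have key : ((1 : B8) - E2u) * (1 - Em2u * expH (-1))
      = expH (-1) * ((1 - E2u * expH 1) * (1 - Em2u)) := by
    linear_combination (expH (-1) - 1) * hEE + (E2u - E2u * Em2u) * hm1
  have hFFFF : F2 * F2' * Fm2' * Fm2 = expH (-1) := by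
    apply mul_right_cancel₀ hD
    calc F2 * F2' * Fm2' * Fm2 * ((1 - E2u * expH 1) * (1 - Em2u))
        = (F2 * F2' * (1 - E2u * expH 1)) * (Fm2' * Fm2 * (1 - Em2u)) := by ring
      _ = (1 - E2u) * (1 - Em2u * expH (-1)) := by rw [hid1, hid2]
      _ = expH (-1) * ((1 - E2u * expH 1) * (1 - Em2u)) := key
  have hG : G2 * G2' * Gm2 * Gm2' = expH 1 := by
    have h1 : (G2 * G2' * Gm2 * Gm2') * (F2 * F2' * Fm2' * Fm2) = 1 := by
      calc (G2 * G2' * Gm2 * Gm2') * (F2 * F2' * Fm2' * Fm2)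
          = (F2 * G2) * (F2' * G2') * ((Fm2 * Gm2) * (Fm2' * Gm2')) := by ring
        _ = 1 := by rw [hG2, hG2', hGm2, hGm2']; ring
    calc G2 * G2' * Gm2 * Gm2'
        = (G2 * G2' * Gm2 * Gm2') * ((F2 * F2' * Fm2' * Fm2) * expH 1) := by
          rw [hFFFF, hm1, mul_one]
      _ = expH 1 := by rw [← mul_assoc, h1, one_mul]
  calc (expH (-(1/2)) * G2 * Gm2) * (expH (-(1/2)) * G2' * Gm2')
      = (expH (-(1/2)) * expH (-(1/2))) * (G2 * G2' * Gm2 * Gm2') := by ring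
    _ = expH (-1) * expH 1 := by rw [hhalf, hG]
    _ = 1 := hm1


end
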